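/- Let α ≥ 1 be a countable ordinal, let X = ω^α + 1 (realized as Iic(ω^α) with the subspace topology from the order topology on ordinals), and let f : X → X be continuous such that some w ∈ X has dense orbit. Then for every limit point x of X, the preimage f⁻¹({x}) is nonempty and every element of f⁻¹({x}) is a limit point of X. -/
import Mathlib

open Ordinal Topology Set Filter in
private lemma my_orbit_injective {Y : Type*} [TopologicalSpace Y] [T1Space Y] [Infinite Y]
    (f : Y → Y) (w : Y) (hw : Dense (Set.range fun n : ℕ => f^[n] w)) :
    Function.Injective (fun n : ℕ => f^[n] w) := by
  have main : ∀ a b : ℕ, a < b → f^[a] w = f^[b] w → False := by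
    intro a b h hab
    have key : ∀ n, ∃ m < b, f^[m] w = f^[n] w := by
      intro n
      induction n using Nat.strong_induction_on with
      | _ n ih =>
        rcases lt_or_ge n b with h' | h'
        · exact ⟨n, h', rfl⟩
        · obtain ⟨m, hm, he⟩ := ih ((n - b) + a) (by omega)
          refine ⟨m, hm, he.trans ?_⟩
          calc f^[(n - b) + a] w = f^[n - b] (f^[a] w) := Function.iterate_add_apply f _ _ w
            _ = f^[n - b] (f^[b] w) := by rw [hab]
            _ = f^[(n - b) + b] w := (Function.iterate_add_apply f _ _ w).symm
            _ = f^[n] w := by rw [Nat.sub_add_cancel h']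
    have hfin : (Set.range fun n : ℕ => f^[n] w).Finite := by
      apply Set.Finite.subset (Set.Finite.image (fun n => f^[n] w) (Set.finite_Iio b))
      rintro _ ⟨n, rfl⟩
      obtain ⟨m, hm, he⟩ := key n
      exact ⟨m, hm, he⟩
    have hcl := hw.closure_eq
    rw [hfin.isClosed.closure_eq] at hcl
    exact Set.infinite_univ (hcl ▸ hfin)
  intro a b hab
  have hab' : f^[a] w = f^[b] w := hab
  by_contra hne
  rcases Nat.lt_or_ge a b with h | h
  · exact main a b h hab'
  · exact main b a (by omega) hab'.symm

open Ordinal Topology Set Filter in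
private lemma my_map_limit {Y : Type*} [TopologicalSpace Y] [T1Space Y] [Infinite Y]
    (f : Y → Y) (hf : Continuous f) (w : Y)
    (hw : Dense (Set.range fun n : ℕ => f^[n] w))
    (p : Y) (hp : (𝓝[≠] p).NeBot) : (𝓝[≠] (f p)).NeBot := by
  by_contra h
  rw [Filter.not_neBot, ← isOpen_singleton_iff_punctured_nhds] at h
  have hU : IsOpen (f ⁻¹' {f p}) := h.preimage hf
  have hUp : f ⁻¹' {f p} ∈ 𝓝 p := hU.mem_nhds rfl
  have h1 : ((f ⁻¹' {f p}) ∩ {p}ᶜ).Nonempty :=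
    Filter.nonempty_of_mem (Filter.inter_mem (mem_nhdsWithin_of_mem_nhds hUp)
      self_mem_nhdsWithin)
  obtain ⟨d₁, ⟨hd₁U, hd₁p⟩, a, ha⟩ := hw.inter_open_nonempty _
    (hU.inter isOpen_compl_singleton) h1
  have ha' : f^[a] w = d₁ := ha
  have hpd : p ∈ ({d₁}ᶜ : Set Y) := fun e => hd₁p (by simp_all)
  have h2 : ((f ⁻¹' {f p}) ∩ {p}ᶜ ∩ {d₁}ᶜ).Nonempty :=
    Filter.nonempty_of_mem (Filter.inter_mem (Filter.inter_mem
      (mem_nhdsWithin_of_mem_nhds hUp) self_mem_nhdsWithin)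
      (mem_nhdsWithin_of_mem_nhds (isOpen_compl_singleton.mem_nhds hpd)))
  obtain ⟨d₂, ⟨⟨hd₂U, hd₂p⟩, hd₂d₁⟩, b, hb⟩ := hw.inter_open_nonempty _
    ((hU.inter isOpen_compl_singleton).inter isOpen_compl_singleton) h2
  have hb' : f^[b] w = d₂ := hb
  have hab : a ≠ b := by rintro rfl; exact hd₂d₁ (hb' ▸ ha' ▸ rfl)
  have key : f^[a + 1] w = f^[b + 1] w := by
    rw [Function.iterate_succ_apply', Function.iterate_succ_apply', ha', hb']
    rw [Set.mem_preimage, Set.mem_singleton_iff] at hd₁U hd₂U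
    rw [hd₁U, hd₂U]
  have : a + 1 = b + 1 := my_orbit_injective f w hw key
  omega

open Ordinal Topology in
/-- Lemma 3.1(iv): For a dynamical system on `ω^α + 1` (realized as `Iic (ω^α)` with
the order topology), `α ≥ 1` countable, with a dense orbit, every limit point `x` has
nonempty preimage, and every point of the preimage is a limit point. -/
theorem preimage_of_limit_point (α : Ordinal) (hα : 1 ≤ α)
    (hcount : α.card ≤ Cardinal.aleph0)
    (f : Set.Iic (omega0 ^ α) → Set.Iic (omega0 ^ α)) (hf : Continuous f)
    (w : Set.Iic (omega0 ^ α)) (hw : Dense (Set.range fun n : ℕ => f^[n] w)) :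
    ∀ x : Set.Iic (omega0 ^ α), (𝓝[≠] x).NeBot →
      (f ⁻¹' {x}).Nonempty ∧ ∀ z ∈ f ⁻¹' {x}, (𝓝[≠] z).NeBot := by
  haveI : CompactSpace (Set.Iic (omega0 ^ α)) :=
    isCompact_iff_compactSpace.mp (by rw [← Set.Icc_bot]; exact isCompact_Icc)
  have hωα : omega0 ≤ omega0 ^ α := by
    conv_lhs => rw [← opow_one omega0]
    exact opow_le_opow_right omega0_pos hα
  have hmem : ∀ n : ℕ, ((n : Ordinal)) ∈ Set.Iic (omega0 ^ α) := fun n =>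
    le_of_lt (lt_of_lt_of_le (nat_lt_omega0 n) hωα)
  haveI : Infinite (Set.Iic (omega0 ^ α)) :=
    Infinite.of_injective (fun n : ℕ => (⟨n, hmem n⟩ : Set.Iic (omega0 ^ α)))
      (fun a b h => by simpa [Subtype.ext_iff] using h)
  have hinj := my_orbit_injective f w hw
  have horange : IsClosed (Set.range f) := (isCompact_range hf).isClosed
  intro x hx
  constructor
  · -- nonempty preimage
    have hxr : x ∈ Set.range f := by
      by_cases hxw : x = w
      · -- x = w : use that x is in the closure of the orbit minus itself
        have hsub : (Set.range fun n : ℕ => f^[n] w) \ {x} ⊆ Set.range f := by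
          rintro u ⟨⟨n, rfl⟩, hu⟩
          match n with
          | 0 => exact absurd (show w = x from hxw.symm) (by simpa using hu)
          | (n+1) => exact ⟨f^[n] w, (Function.iterate_succ_apply' f n w).symm⟩
        have hcl : x ∈ closure ((Set.range fun n : ℕ => f^[n] w) \ {x}) := by
          rw [mem_closure_iff]
          intro U hUo hxU
          have h1 : (U ∩ {x}ᶜ).Nonempty :=
            Filter.nonempty_of_mem (Filter.inter_mem
              (mem_nhdsWithin_of_mem_nhds (hUo.mem_nhds hxU)) self_mem_nhdsWithin)
          obtain ⟨u, ⟨hu1, hu2⟩, hu3⟩ := hw.inter_open_nonempty _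
            (hUo.inter isOpen_compl_singleton) h1
          exact ⟨u, hu1, hu3, hu2⟩
        have := closure_mono hsub hcl
        rwa [horange.closure_eq] at this
      · have hsub : (Set.range fun n : ℕ => f^[n] w) ⊆ Set.range f ∪ {w} := by
          rintro u ⟨n, rfl⟩
          match n with
          | 0 => exact Or.inr rfl
          | (n+1) => exact Or.inl ⟨f^[n] w, (Function.iterate_succ_apply' f n w).symm⟩
        have hcl : IsClosed (Set.range f ∪ {w}) := horange.union isClosed_singleton
        have huniv : (Set.univ : Set (Set.Iic (omega0 ^ α))) ⊆ Set.range f ∪ {w} := by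
          rw [← hw.closure_eq, ← hcl.closure_eq]
          exact closure_mono hsub
        rcases huniv (Set.mem_univ x) with h | h
        · exact h
        · exact absurd h hxw
    obtain ⟨z, hz⟩ := hxr
    exact ⟨z, hz⟩
  · -- every preimage point is a limit point
    intro z hz
    by_contra hziso
    rw [Filter.not_neBot, ← isOpen_singleton_iff_punctured_nhds] at hziso
    obtain ⟨u, hu1, n, hn⟩ := hw.inter_open_nonempty _ hziso ⟨z, rfl⟩
    have hzn : f^[n] w = z := by
      have : u = z := hu1
      exact hn.trans this
    have hfz : f z = x := hz
    have hlim : ∀ j : ℕ, (𝓝[≠] (f^[n + 1 + j] w)).NeBot := by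
      intro j
      induction j with
      | zero =>
        have e : f^[n + 1 + 0] w = x := by
          rw [Nat.add_zero, Function.iterate_succ_apply', hzn, hfz]
        rw [e]; exact hx
      | succ j ih =>
        have e : f^[n + 1 + (j + 1)] w = f (f^[n + 1 + j] w) := by
          rw [← Nat.add_assoc, Function.iterate_succ_apply']
        rw [e]
        exact my_map_limit f hf w hw _ ih
    -- the isolated points 1, ..., n+2 are all in the orbit at times ≤ n
    set pt : ℕ → Set.Iic (omega0 ^ α) := fun k => ⟨((k + 1 : ℕ) : Ordinal), hmem (k + 1)⟩
      with hpt
    have hpt_iso : ∀ k : ℕ, IsOpen ({pt k} : Set (Set.Iic (omega0 ^ α))) := by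
      intro k
      have : ({pt k} : Set (Set.Iic (omega0 ^ α))) =
          Subtype.val ⁻¹' Set.Ioo (k : Ordinal) ((k : Ordinal) + 2) := by
        ext ⟨v, hv⟩
        simp only [Set.mem_singleton_iff, Set.mem_preimage, Set.mem_Ioo, Subtype.ext_iff, hpt]
        constructor
        · rintro rfl
          push_cast
          constructor
          · exact lt_of_lt_of_le (by rw [Ordinal.add_one_eq_succ]; exact Order.lt_succ _)
              le_rfl
          · rw [show (k : Ordinal) + 2 = Order.succ ((k : Ordinal) + 1) by
              rw [← Ordinal.add_one_eq_succ, add_assoc, one_add_one_eq_two]]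
            exact Order.lt_succ _
        · rintro ⟨h1, h2⟩
          push_cast
          rw [show (k : Ordinal) + 2 = Order.succ ((k : Ordinal) + 1) by
            rw [← Ordinal.add_one_eq_succ, add_assoc, one_add_one_eq_two],
            Order.lt_succ_iff] at h2
          have h1' : (k : Ordinal) + 1 ≤ v := by
            rw [Ordinal.add_one_eq_succ, Order.succ_le_iff]; exact h1
          exact le_antisymm h2 h1'
      rw [this]
      exact isOpen_Ioo.preimage continuous_subtype_val
    have hpt_orbit : ∀ k : ℕ, ∃ t : ℕ, f^[t] w = pt k := by
      intro k
      obtain ⟨u, hu1, t, ht⟩ := hw.inter_open_nonempty _ (hpt_iso k) ⟨pt k, rfl⟩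
      exact ⟨t, ht.trans hu1⟩
    have hpt_le : ∀ k t : ℕ, f^[t] w = pt k → t ≤ n := by
      intro k t ht
      by_contra hgt
      have hNB : (𝓝[≠] (pt k)).NeBot := by
        have := hlim (t - (n + 1))
        rwa [show n + 1 + (t - (n + 1)) = t by omega, ht] at this
      exact hNB.ne ((isOpen_singleton_iff_punctured_nhds _).mp (hpt_iso k))
    choose t ht using hpt_orbit
    obtain ⟨k, k', hkk', he⟩ := Fintype.exists_ne_map_eq_of_card_lt
      (fun k : Fin (n + 2) => (⟨t k.val, Nat.lt_succ_of_le (hpt_le k.val _ (ht k.val))⟩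
        : Fin (n + 1))) (by simp)
    apply hkk'
    have htk : t k.val = t k'.val := Fin.mk.injEq _ _ _ _ ▸ he
    have hptk : pt k.val = pt k'.val := by rw [← ht k.val, ← ht k'.val, htk]
    have : ((k.val + 1 : ℕ) : Ordinal) = ((k'.val + 1 : ℕ) : Ordinal) :=
      Subtype.ext_iff.mp hptk
    have h2 : (k.val : Ordinal) = (k'.val : Ordinal) := by
      have := this
      push_cast at this
      rw [Ordinal.add_one_eq_succ, Ordinal.add_one_eq_succ] at this
      exact Order.succ_injective this
    have : k.val = k'.val := by exact_mod_cast h2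
    exact Fin.ext this
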